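/- Let W' = {(x₁,...,x₉,x₀) ∈ ℂ¹⁰ : x₁ + x₇ + x₈ = 0, x₆ + x₉ + x₀ = 0, x₅ + x₈ + x₀ = 0, x₂ + x₇ + x₉ = 0, x₄ + x₅ + x₇ + x₈ = 0, x₃ + x₆ + x₈ + x₀ = 0}, and let Π₁ = {x₁ = x₂ = x₃ = x₄ = x₅ = x₆ = 0}, Π₂ = {x₁ = x₂ = x₃ = x₇ = x₈ = x₉ = 0}, Π₃ = {x₀ = x₁ = x₄ = x₅ = x₇ = x₈ = 0}, Π₄ = {x₀ = x₂ = x₄ = x₆ = x₇ = x₉ = 0}, Π₅ = {x₀ = x₃ = x₅ = x₆ = x₈ = x₉ = 0} be coordinate subspaces of ℂ¹⁰. Then W' has dimension 4, and for each i = 1, ..., 5 the intersection W' ∩ Πᵢ is a one-dimensional subspace of ℂ¹⁰. -/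
import Mathlib

/-- Coordinates on `ℂ¹⁰` are ordered `(x₁, …, x₉, x₀)`, i.e. index `i < 9` corresponds to
`x_{i+1}` and index `9` corresponds to `x₀`.  `zeroIndicesP3 i` is the set of coordinates
that vanish on the coordinate subspace `Π_{i+1}`:
`Π₁ = {x₁ = ⋯ = x₆ = 0}`, `Π₂ = {x₁ = x₂ = x₃ = x₇ = x₈ = x₉ = 0}`,
`Π₃ = {x₀ = x₁ = x₄ = x₅ = x₇ = x₈ = 0}`, `Π₄ = {x₀ = x₂ = x₄ = x₆ = x₇ = x₉ = 0}`,
`Π₅ = {x₀ = x₃ = x₅ = x₆ = x₈ = x₉ = 0}`. -/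
def zeroIndicesP3 : Fin 5 → Set (Fin 10) :=
  ![{0, 1, 2, 3, 4, 5}, {0, 1, 2, 6, 7, 8}, {0, 3, 4, 6, 7, 9},
    {1, 3, 5, 6, 8, 9}, {2, 4, 5, 7, 8, 9}]

private def vv : Fin 4 → (Fin 10 → ℂ) :=
  ![![-1,-1,0,-1,0,0,1,0,0,0],
    ![-1,0,-1,0,-1,0,0,1,0,0],
    ![0,-1,1,0,0,-1,0,0,1,0],
    ![0,0,0,1,-1,-1,0,0,0,1]]

private def uu : Fin 5 → (Fin 10 → ℂ) :=
  ![![0,0,0,0,0,0,1,-1,-1,1],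
    ![0,0,0,1,-1,-1,0,0,0,1],
    ![0,-1,1,0,0,-1,0,0,1,0],
    ![-1,0,-1,0,-1,0,0,1,0,0],
    ![-1,-1,0,-1,0,0,1,0,0,0]]

private lemma zI0 : zeroIndicesP3 0 = {0, 1, 2, 3, 4, 5} := rfl
private lemma zI1 : zeroIndicesP3 1 = {0, 1, 2, 6, 7, 8} := rfl
private lemma zI2 : zeroIndicesP3 2 = {0, 3, 4, 6, 7, 9} := rfl
private lemma zI3 : zeroIndicesP3 3 = {1, 3, 5, 6, 8, 9} := rfl
private lemma zI4 : zeroIndicesP3 4 = {2, 4, 5, 7, 8, 9} := rfl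

@[simp] private lemma fin10_mk_2 (h : 2 < 10) : (⟨2, h⟩ : Fin 10) = 2 := rfl
@[simp] private lemma fin10_mk_3 (h : 3 < 10) : (⟨3, h⟩ : Fin 10) = 3 := rfl
@[simp] private lemma fin10_mk_4 (h : 4 < 10) : (⟨4, h⟩ : Fin 10) = 4 := rfl
@[simp] private lemma fin10_mk_5 (h : 5 < 10) : (⟨5, h⟩ : Fin 10) = 5 := rfl
@[simp] private lemma fin10_mk_6 (h : 6 < 10) : (⟨6, h⟩ : Fin 10) = 6 := rfl
@[simp] private lemma fin10_mk_7 (h : 7 < 10) : (⟨7, h⟩ : Fin 10) = 7 := rfl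
@[simp] private lemma fin10_mk_8 (h : 8 < 10) : (⟨8, h⟩ : Fin 10) = 8 := rfl
@[simp] private lemma fin10_mk_9 (h : 9 < 10) : (⟨9, h⟩ : Fin 10) = 9 := rfl
@[simp] private lemma fin5_mk_2 (h : 2 < 5) : (⟨2, h⟩ : Fin 5) = 2 := rfl
@[simp] private lemma fin5_mk_3 (h : 3 < 5) : (⟨3, h⟩ : Fin 5) = 3 := rfl
@[simp] private lemma fin5_mk_4 (h : 4 < 5) : (⟨4, h⟩ : Fin 5) = 4 := rfl
@[simp] private lemma fin4_mk_2 (h : 2 < 4) : (⟨2, h⟩ : Fin 4) = 2 := rfl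
@[simp] private lemma fin4_mk_3 (h : 3 < 4) : (⟨3, h⟩ : Fin 4) = 3 := rfl
@[simp] private lemma vv_0_0 : vv 0 (0 : Fin 10) = -1 := rfl
@[simp] private lemma vv_0_1 : vv 0 (1 : Fin 10) = -1 := rfl
@[simp] private lemma vv_0_2 : vv 0 (2 : Fin 10) = 0 := rfl
@[simp] private lemma vv_0_3 : vv 0 (3 : Fin 10) = -1 := rfl
@[simp] private lemma vv_0_4 : vv 0 (4 : Fin 10) = 0 := rfl
@[simp] private lemma vv_0_5 : vv 0 (5 : Fin 10) = 0 := rfl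
@[simp] private lemma vv_0_6 : vv 0 (6 : Fin 10) = 1 := rfl
@[simp] private lemma vv_0_7 : vv 0 (7 : Fin 10) = 0 := rfl
@[simp] private lemma vv_0_8 : vv 0 (8 : Fin 10) = 0 := rfl
@[simp] private lemma vv_0_9 : vv 0 (9 : Fin 10) = 0 := rfl
@[simp] private lemma vv_1_0 : vv 1 (0 : Fin 10) = -1 := rfl
@[simp] private lemma vv_1_1 : vv 1 (1 : Fin 10) = 0 := rfl
@[simp] private lemma vv_1_2 : vv 1 (2 : Fin 10) = -1 := rfl
@[simp] private lemma vv_1_3 : vv 1 (3 : Fin 10) = 0 := rfl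
@[simp] private lemma vv_1_4 : vv 1 (4 : Fin 10) = -1 := rfl
@[simp] private lemma vv_1_5 : vv 1 (5 : Fin 10) = 0 := rfl
@[simp] private lemma vv_1_6 : vv 1 (6 : Fin 10) = 0 := rfl
@[simp] private lemma vv_1_7 : vv 1 (7 : Fin 10) = 1 := rfl
@[simp] private lemma vv_1_8 : vv 1 (8 : Fin 10) = 0 := rfl
@[simp] private lemma vv_1_9 : vv 1 (9 : Fin 10) = 0 := rfl
@[simp] private lemma vv_2_0 : vv 2 (0 : Fin 10) = 0 := rfl
@[simp] private lemma vv_2_1 : vv 2 (1 : Fin 10) = -1 := rfl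
@[simp] private lemma vv_2_2 : vv 2 (2 : Fin 10) = 1 := rfl
@[simp] private lemma vv_2_3 : vv 2 (3 : Fin 10) = 0 := rfl
@[simp] private lemma vv_2_4 : vv 2 (4 : Fin 10) = 0 := rfl
@[simp] private lemma vv_2_5 : vv 2 (5 : Fin 10) = -1 := rfl
@[simp] private lemma vv_2_6 : vv 2 (6 : Fin 10) = 0 := rfl
@[simp] private lemma vv_2_7 : vv 2 (7 : Fin 10) = 0 := rfl
@[simp] private lemma vv_2_8 : vv 2 (8 : Fin 10) = 1 := rfl
@[simp] private lemma vv_2_9 : vv 2 (9 : Fin 10) = 0 := rfl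
@[simp] private lemma vv_3_0 : vv 3 (0 : Fin 10) = 0 := rfl
@[simp] private lemma vv_3_1 : vv 3 (1 : Fin 10) = 0 := rfl
@[simp] private lemma vv_3_2 : vv 3 (2 : Fin 10) = 0 := rfl
@[simp] private lemma vv_3_3 : vv 3 (3 : Fin 10) = 1 := rfl
@[simp] private lemma vv_3_4 : vv 3 (4 : Fin 10) = -1 := rfl
@[simp] private lemma vv_3_5 : vv 3 (5 : Fin 10) = -1 := rfl
@[simp] private lemma vv_3_6 : vv 3 (6 : Fin 10) = 0 := rfl
@[simp] private lemma vv_3_7 : vv 3 (7 : Fin 10) = 0 := rfl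
@[simp] private lemma vv_3_8 : vv 3 (8 : Fin 10) = 0 := rfl
@[simp] private lemma vv_3_9 : vv 3 (9 : Fin 10) = 1 := rfl
@[simp] private lemma uu_0_0 : uu 0 (0 : Fin 10) = 0 := rfl
@[simp] private lemma uu_0_1 : uu 0 (1 : Fin 10) = 0 := rfl
@[simp] private lemma uu_0_2 : uu 0 (2 : Fin 10) = 0 := rfl
@[simp] private lemma uu_0_3 : uu 0 (3 : Fin 10) = 0 := rfl
@[simp] private lemma uu_0_4 : uu 0 (4 : Fin 10) = 0 := rfl
@[simp] private lemma uu_0_5 : uu 0 (5 : Fin 10) = 0 := rfl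
@[simp] private lemma uu_0_6 : uu 0 (6 : Fin 10) = 1 := rfl
@[simp] private lemma uu_0_7 : uu 0 (7 : Fin 10) = -1 := rfl
@[simp] private lemma uu_0_8 : uu 0 (8 : Fin 10) = -1 := rfl
@[simp] private lemma uu_0_9 : uu 0 (9 : Fin 10) = 1 := rfl
@[simp] private lemma uu_1_0 : uu 1 (0 : Fin 10) = 0 := rfl
@[simp] private lemma uu_1_1 : uu 1 (1 : Fin 10) = 0 := rfl
@[simp] private lemma uu_1_2 : uu 1 (2 : Fin 10) = 0 := rfl
@[simp] private lemma uu_1_3 : uu 1 (3 : Fin 10) = 1 := rfl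
@[simp] private lemma uu_1_4 : uu 1 (4 : Fin 10) = -1 := rfl
@[simp] private lemma uu_1_5 : uu 1 (5 : Fin 10) = -1 := rfl
@[simp] private lemma uu_1_6 : uu 1 (6 : Fin 10) = 0 := rfl
@[simp] private lemma uu_1_7 : uu 1 (7 : Fin 10) = 0 := rfl
@[simp] private lemma uu_1_8 : uu 1 (8 : Fin 10) = 0 := rfl
@[simp] private lemma uu_1_9 : uu 1 (9 : Fin 10) = 1 := rfl
@[simp] private lemma uu_2_0 : uu 2 (0 : Fin 10) = 0 := rfl
@[simp] private lemma uu_2_1 : uu 2 (1 : Fin 10) = -1 := rfl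
@[simp] private lemma uu_2_2 : uu 2 (2 : Fin 10) = 1 := rfl
@[simp] private lemma uu_2_3 : uu 2 (3 : Fin 10) = 0 := rfl
@[simp] private lemma uu_2_4 : uu 2 (4 : Fin 10) = 0 := rfl
@[simp] private lemma uu_2_5 : uu 2 (5 : Fin 10) = -1 := rfl
@[simp] private lemma uu_2_6 : uu 2 (6 : Fin 10) = 0 := rfl
@[simp] private lemma uu_2_7 : uu 2 (7 : Fin 10) = 0 := rfl
@[simp] private lemma uu_2_8 : uu 2 (8 : Fin 10) = 1 := rfl
@[simp] private lemma uu_2_9 : uu 2 (9 : Fin 10) = 0 := rfl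
@[simp] private lemma uu_3_0 : uu 3 (0 : Fin 10) = -1 := rfl
@[simp] private lemma uu_3_1 : uu 3 (1 : Fin 10) = 0 := rfl
@[simp] private lemma uu_3_2 : uu 3 (2 : Fin 10) = -1 := rfl
@[simp] private lemma uu_3_3 : uu 3 (3 : Fin 10) = 0 := rfl
@[simp] private lemma uu_3_4 : uu 3 (4 : Fin 10) = -1 := rfl
@[simp] private lemma uu_3_5 : uu 3 (5 : Fin 10) = 0 := rfl
@[simp] private lemma uu_3_6 : uu 3 (6 : Fin 10) = 0 := rfl
@[simp] private lemma uu_3_7 : uu 3 (7 : Fin 10) = 1 := rfl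
@[simp] private lemma uu_3_8 : uu 3 (8 : Fin 10) = 0 := rfl
@[simp] private lemma uu_3_9 : uu 3 (9 : Fin 10) = 0 := rfl
@[simp] private lemma uu_4_0 : uu 4 (0 : Fin 10) = -1 := rfl
@[simp] private lemma uu_4_1 : uu 4 (1 : Fin 10) = -1 := rfl
@[simp] private lemma uu_4_2 : uu 4 (2 : Fin 10) = 0 := rfl
@[simp] private lemma uu_4_3 : uu 4 (3 : Fin 10) = -1 := rfl
@[simp] private lemma uu_4_4 : uu 4 (4 : Fin 10) = 0 := rfl
@[simp] private lemma uu_4_5 : uu 4 (5 : Fin 10) = 0 := rfl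
@[simp] private lemma uu_4_6 : uu 4 (6 : Fin 10) = 1 := rfl
@[simp] private lemma uu_4_7 : uu 4 (7 : Fin 10) = 0 := rfl
@[simp] private lemma uu_4_8 : uu 4 (8 : Fin 10) = 0 := rfl
@[simp] private lemma uu_4_9 : uu 4 (9 : Fin 10) = 0 := rfl

private lemma vv_li : LinearIndependent ℂ vv := by
  rw [Fintype.linearIndependent_iff]
  intro g h
  have h6 := congrFun h 6
  have h7 := congrFun h 7
  have h8 := congrFun h 8
  have h9 := congrFun h 9
  simp [Fin.sum_univ_four] at h6 h7 h8 h9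
  intro i
  fin_cases i <;> simpa using ‹_›

set_option maxHeartbeats 3200000 in
/-- The alternative subspace
`W' = {x ∈ ℂ¹⁰ : x₁ + x₇ + x₈ = 0, x₆ + x₉ + x₀ = 0, x₅ + x₈ + x₀ = 0, x₂ + x₇ + x₉ = 0,
x₄ + x₅ + x₇ + x₈ = 0, x₃ + x₆ + x₈ + x₀ = 0}` has dimension 4, and it meets each of the
coordinate subspaces `Π₁, …, Π₅` in a one-dimensional subspace. -/
theorem alternative_plane_dim_and_intersections
    (W' : Submodule ℂ (Fin 10 → ℂ))
    (hW' : ∀ x : Fin 10 → ℂ, x ∈ W' ↔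
      x 0 + x 6 + x 7 = 0 ∧ x 5 + x 8 + x 9 = 0 ∧ x 4 + x 7 + x 9 = 0 ∧
      x 1 + x 6 + x 8 = 0 ∧ x 3 + x 4 + x 6 + x 7 = 0 ∧ x 2 + x 5 + x 7 + x 9 = 0)
    (P : Fin 5 → Submodule ℂ (Fin 10 → ℂ))
    (hP : ∀ i, ∀ x : Fin 10 → ℂ, x ∈ P i ↔ ∀ j ∈ zeroIndicesP3 i, x j = 0) :
    Module.finrank ℂ W' = 4 ∧
    ∀ i, Module.finrank ℂ (W' ⊓ P i : Submodule ℂ (Fin 10 → ℂ)) = 1 := by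
  have hWspan : W' = Submodule.span ℂ (Set.range vv) := by
    apply le_antisymm
    · intro x hx
      obtain ⟨h1, h2, h3, h4, h5, h6⟩ := (hW' x).mp hx
      have hx' : x = x 6 • vv 0 + x 7 • vv 1 + x 8 • vv 2 + x 9 • vv 3 := by
        funext j
        fin_cases j <;> simp <;>
          first
          | linear_combination h1
          | linear_combination h2
          | linear_combination h3
          | linear_combination h4
          | linear_combination h5 - h3
          | linear_combination h6 - h2
          | linear_combination -h1
          | linear_combination -h2
          | linear_combination -h3
          | linear_combination -h4
          | linear_combination h3 - h5
          | linear_combination h2 - h6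
      rw [hx']
      have m : ∀ i, vv i ∈ Submodule.span ℂ (Set.range vv) :=
        fun i => Submodule.subset_span ⟨i, rfl⟩
      exact Submodule.add_mem _ (Submodule.add_mem _ (Submodule.add_mem _
        (Submodule.smul_mem _ _ (m 0)) (Submodule.smul_mem _ _ (m 1)))
        (Submodule.smul_mem _ _ (m 2))) (Submodule.smul_mem _ _ (m 3))
    · rw [Submodule.span_le]
      rintro y ⟨i, rfl⟩
      rw [SetLike.mem_coe, hW']
      fin_cases i <;> norm_num
  refine ⟨by rw [hWspan, finrank_span_eq_card vv_li]; rfl, ?_⟩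
  intro i
  have key : W' ⊓ P i = Submodule.span ℂ {uu i} := by
    apply le_antisymm
    · rintro x ⟨hxW, hxP⟩
      obtain ⟨h1, h2, h3, h4, h5, h6⟩ := (hW' x).mp hxW
      replace hxP := (hP i x).mp hxP
      rw [Submodule.mem_span_singleton]
      fin_cases i
      · have w0 : x 0 = 0 := hxP 0 (show (0:Fin 10) ∈ ({0, 1, 2, 3, 4, 5} : Set (Fin 10)) by simp)
        have w1 : x 1 = 0 := hxP 1 (show (1:Fin 10) ∈ ({0, 1, 2, 3, 4, 5} : Set (Fin 10)) by simp)
        have w2 : x 2 = 0 := hxP 2 (show (2:Fin 10) ∈ ({0, 1, 2, 3, 4, 5} : Set (Fin 10)) by simp)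
        have w3 : x 3 = 0 := hxP 3 (show (3:Fin 10) ∈ ({0, 1, 2, 3, 4, 5} : Set (Fin 10)) by simp)
        have w4 : x 4 = 0 := hxP 4 (show (4:Fin 10) ∈ ({0, 1, 2, 3, 4, 5} : Set (Fin 10)) by simp)
        have w5 : x 5 = 0 := hxP 5 (show (5:Fin 10) ∈ ({0, 1, 2, 3, 4, 5} : Set (Fin 10)) by simp)
        have e7 : x 7 = -x 6 := by linear_combination h1 - w0
        have e8 : x 8 = -x 6 := by linear_combination h4 - w1
        have e9 : x 9 = x 6 := by linear_combination -h1 + h3 + w0 - w4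
        refine ⟨x 6, ?_⟩
        funext j
        fin_cases j <;> simp [w0,w1,w2,w3,w4,w5,e7,e8,e9]
      · have w0 : x 0 = 0 := hxP 0 (show (0:Fin 10) ∈ ({0, 1, 2, 6, 7, 8} : Set (Fin 10)) by simp)
        have w1 : x 1 = 0 := hxP 1 (show (1:Fin 10) ∈ ({0, 1, 2, 6, 7, 8} : Set (Fin 10)) by simp)
        have w2 : x 2 = 0 := hxP 2 (show (2:Fin 10) ∈ ({0, 1, 2, 6, 7, 8} : Set (Fin 10)) by simp)
        have w6 : x 6 = 0 := hxP 6 (show (6:Fin 10) ∈ ({0, 1, 2, 6, 7, 8} : Set (Fin 10)) by simp)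
        have w7 : x 7 = 0 := hxP 7 (show (7:Fin 10) ∈ ({0, 1, 2, 6, 7, 8} : Set (Fin 10)) by simp)
        have w8 : x 8 = 0 := hxP 8 (show (8:Fin 10) ∈ ({0, 1, 2, 6, 7, 8} : Set (Fin 10)) by simp)
        have e3 : x 3 = x 9 := by linear_combination h5 - h3 - w6
        have e4 : x 4 = -x 9 := by linear_combination h3 - w7
        have e5 : x 5 = -x 9 := by linear_combination h2 - w8
        refine ⟨x 9, ?_⟩
        funext j
        fin_cases j <;> simp [w0,w1,w2,w6,w7,w8,e3,e4,e5]
      · have w0 : x 0 = 0 := hxP 0 (show (0:Fin 10) ∈ ({0, 3, 4, 6, 7, 9} : Set (Fin 10)) by simp)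
        have w3 : x 3 = 0 := hxP 3 (show (3:Fin 10) ∈ ({0, 3, 4, 6, 7, 9} : Set (Fin 10)) by simp)
        have w4 : x 4 = 0 := hxP 4 (show (4:Fin 10) ∈ ({0, 3, 4, 6, 7, 9} : Set (Fin 10)) by simp)
        have w6 : x 6 = 0 := hxP 6 (show (6:Fin 10) ∈ ({0, 3, 4, 6, 7, 9} : Set (Fin 10)) by simp)
        have w7 : x 7 = 0 := hxP 7 (show (7:Fin 10) ∈ ({0, 3, 4, 6, 7, 9} : Set (Fin 10)) by simp)
        have w9 : x 9 = 0 := hxP 9 (show (9:Fin 10) ∈ ({0, 3, 4, 6, 7, 9} : Set (Fin 10)) by simp)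
        have e1 : x 1 = -x 8 := by linear_combination h4 - w6
        have e2 : x 2 = x 8 := by linear_combination h6 - h2 - w7
        have e5 : x 5 = -x 8 := by linear_combination h2 - w9
        refine ⟨x 8, ?_⟩
        funext j
        fin_cases j <;> simp [w0,w3,w4,w6,w7,w9,e1,e2,e5]
      · have w1 : x 1 = 0 := hxP 1 (show (1:Fin 10) ∈ ({1, 3, 5, 6, 8, 9} : Set (Fin 10)) by simp)
        have w3 : x 3 = 0 := hxP 3 (show (3:Fin 10) ∈ ({1, 3, 5, 6, 8, 9} : Set (Fin 10)) by simp)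
        have w5 : x 5 = 0 := hxP 5 (show (5:Fin 10) ∈ ({1, 3, 5, 6, 8, 9} : Set (Fin 10)) by simp)
        have w6 : x 6 = 0 := hxP 6 (show (6:Fin 10) ∈ ({1, 3, 5, 6, 8, 9} : Set (Fin 10)) by simp)
        have w8 : x 8 = 0 := hxP 8 (show (8:Fin 10) ∈ ({1, 3, 5, 6, 8, 9} : Set (Fin 10)) by simp)
        have w9 : x 9 = 0 := hxP 9 (show (9:Fin 10) ∈ ({1, 3, 5, 6, 8, 9} : Set (Fin 10)) by simp)
        have e0 : x 0 = -x 7 := by linear_combination h1 - w6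
        have e2 : x 2 = -x 7 := by linear_combination h6 - w5 - w9
        have e4 : x 4 = -x 7 := by linear_combination h3 - w9
        refine ⟨x 7, ?_⟩
        funext j
        fin_cases j <;> simp [w1,w3,w5,w6,w8,w9,e0,e2,e4]
      · have w2 : x 2 = 0 := hxP 2 (show (2:Fin 10) ∈ ({2, 4, 5, 7, 8, 9} : Set (Fin 10)) by simp)
        have w4 : x 4 = 0 := hxP 4 (show (4:Fin 10) ∈ ({2, 4, 5, 7, 8, 9} : Set (Fin 10)) by simp)
        have w5 : x 5 = 0 := hxP 5 (show (5:Fin 10) ∈ ({2, 4, 5, 7, 8, 9} : Set (Fin 10)) by simp)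
        have w7 : x 7 = 0 := hxP 7 (show (7:Fin 10) ∈ ({2, 4, 5, 7, 8, 9} : Set (Fin 10)) by simp)
        have w8 : x 8 = 0 := hxP 8 (show (8:Fin 10) ∈ ({2, 4, 5, 7, 8, 9} : Set (Fin 10)) by simp)
        have w9 : x 9 = 0 := hxP 9 (show (9:Fin 10) ∈ ({2, 4, 5, 7, 8, 9} : Set (Fin 10)) by simp)
        have e0 : x 0 = -x 6 := by linear_combination h1 - w7
        have e1 : x 1 = -x 6 := by linear_combination h4 - w8
        have e3 : x 3 = -x 6 := by linear_combination h5 - w4 - w7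
        refine ⟨x 6, ?_⟩
        funext j
        fin_cases j <;> simp [w2,w4,w5,w7,w8,w9,e0,e1,e3]
    · rw [Submodule.span_le]
      rintro y hy
      rw [Set.mem_singleton_iff] at hy
      subst hy
      refine Submodule.mem_inf.mpr ⟨?_, ?_⟩
      · rw [hW']
        fin_cases i <;> norm_num
      · rw [hP]
        intro j hj
        fin_cases i
        · replace hj : j ∈ ({0, 1, 2, 3, 4, 5} : Set (Fin 10)) := hj
          simp only [Set.mem_insert_iff, Set.mem_singleton_iff] at hj
          rcases hj with h|h|h|h|h|h <;> subst h <;> norm_num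
        · replace hj : j ∈ ({0, 1, 2, 6, 7, 8} : Set (Fin 10)) := hj
          simp only [Set.mem_insert_iff, Set.mem_singleton_iff] at hj
          rcases hj with h|h|h|h|h|h <;> subst h <;> norm_num
        · replace hj : j ∈ ({0, 3, 4, 6, 7, 9} : Set (Fin 10)) := hj
          simp only [Set.mem_insert_iff, Set.mem_singleton_iff] at hj
          rcases hj with h|h|h|h|h|h <;> subst h <;> norm_num
        · replace hj : j ∈ ({1, 3, 5, 6, 8, 9} : Set (Fin 10)) := hj
          simp only [Set.mem_insert_iff, Set.mem_singleton_iff] at hj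
          rcases hj with h|h|h|h|h|h <;> subst h <;> norm_num
        · replace hj : j ∈ ({2, 4, 5, 7, 8, 9} : Set (Fin 10)) := hj
          simp only [Set.mem_insert_iff, Set.mem_singleton_iff] at hj
          rcases hj with h|h|h|h|h|h <;> subst h <;> norm_num
  rw [key]
  refine finrank_span_singleton ?_
  intro hh
  fin_cases i
  · simpa using congrFun hh 6
  · simpa using congrFun hh 9
  · simpa using congrFun hh 8
  · simpa using congrFun hh 7
  · simpa using congrFun hh 6
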